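/- Let A = A_inf⟨X₀, X₁⟩/(X₀X₁ − [ϖ^♭]) and let γ act A_inf-linearly by γ(X₀) = [ε]^{-1}X₀, γ(X₁) = [ε]X₁. Then in the complex A → A (in degrees 0, 1) with differential (γ−1)/([ε]−1), the differential is given on monomials by X₀^m ↦ −([ε]^{-m} + ⋯ + [ε]^{-1})·X₀^m and X₁^m ↦ (1 + [ε] + ⋯ + [ε]^{m−1})·X₁^m. Consequently, after base change along the crystalline specialization ϑ̃ : A_inf → W(k) (which kills [ϖ^♭] and sends [ε] to 1), the differential sends T_0^{m/p} ↦ −m·T_0^{m/p} and T_1^{m/p} ↦ m·T_1^{m/p}; in particular T_i^{p^{r−1}} is a cocycle modulo p^r. -/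
import Mathlib


/-- Let `A = A_inf⟨X₀, X₁⟩/(X₀X₁ − [ϖ^♭])` with `γ` acting
`A_inf`-linearly by `γ X₀ = [ε]⁻¹ X₀`, `γ X₁ = [ε] X₁`.  In the two-term complex
`A → A` with differential `δ = (γ − 1)/([ε] − 1)`, the differential is given on
monomials by `X₀^m ↦ −([ε]^{-m} + ⋯ + [ε]^{-1}) X₀^m` and
`X₁^m ↦ (1 + [ε] + ⋯ + [ε]^{m−1}) X₁^m`.  Consequently, after base change along
the crystalline specialization `ϑ̃` (which sends `[ε]` to `1`), the differential
sends the monomial of exponent `m` to `∓m` times itself; in particular the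
`p^r`-th powers are cocycles modulo `p^r`. -/
theorem statement18
    (A : Type) [CommRing A]
    (eps : Aˣ)                                  -- the unit `[ε]`
    (X0 X1 : A) (γ : A →+* A)
    (hγ0 : γ X0 = ((eps⁻¹ : Aˣ) : A) * X0)
    (hγ1 : γ X1 = ((eps : Aˣ) : A) * X1)
    (δ : A → A)
    (hδ : ∀ x, (((eps : Aˣ) : A) - 1) * δ x = γ x - x)
    (htf : ∀ x : A, (((eps : Aˣ) : A) - 1) * x = 0 → x = 0) :
    (∀ m : ℕ, δ (X0 ^ m) =
      -(∑ i ∈ Finset.range m, ((eps⁻¹ : Aˣ) : A) ^ (i + 1)) * X0 ^ m) ∧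
    (∀ m : ℕ, δ (X1 ^ m) =
      (∑ i ∈ Finset.range m, ((eps : Aˣ) : A) ^ i) * X1 ^ m) ∧
    -- base change along the crystalline specialization `ϑ̃ : A_inf → W(k)`
    ∀ (B : Type) [CommRing B], ∀ θ : A →+* B, θ ((eps : Aˣ) : A) = 1 →
      (∀ m : ℕ, θ (δ (X0 ^ m)) = -(m : B) * θ X0 ^ m) ∧
      (∀ m : ℕ, θ (δ (X1 ^ m)) = (m : B) * θ X1 ^ m) ∧
      -- in particular `T_i^{p^{r-1}}` is a cocycle modulo `p^r`
      (∀ (pp r : ℕ), θ (δ (X0 ^ pp ^ r)) = -((pp : B)) ^ r * θ X0 ^ pp ^ r) ∧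
      (∀ (pp r : ℕ), θ (δ (X1 ^ pp ^ r)) = ((pp : B)) ^ r * θ X1 ^ pp ^ r) := by
  set u : A := ((eps : Aˣ) : A) with hu
  set v : A := ((eps⁻¹ : Aˣ) : A) with hv
  have huv : u * v = 1 := by
    rw [hu, hv, ← Units.val_mul, mul_inv_cancel, Units.val_one]
  -- key telescoping identity
  have key0 : ∀ m : ℕ, (u - 1) * (∑ i ∈ Finset.range m, v ^ (i + 1)) = 1 - v ^ m := by
    intro m
    induction m with
    | zero => simp
    | succ n ih =>
      rw [Finset.sum_range_succ, mul_add, ih]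
      have : (u - 1) * v ^ (n + 1) = v ^ n - v ^ (n + 1) := by
        have : u * v ^ (n + 1) = v ^ n := by
          rw [pow_succ, ← mul_assoc, mul_comm u, mul_assoc, huv, mul_one]
        rw [sub_mul, this, one_mul]
      rw [this]; ring
  have key1 : ∀ m : ℕ, (u - 1) * (∑ i ∈ Finset.range m, u ^ i) = u ^ m - 1 := by
    intro m
    rw [mul_comm, geom_sum_mul]
  have hγ0m : ∀ m : ℕ, γ (X0 ^ m) = v ^ m * X0 ^ m := by
    intro m
    rw [map_pow, hγ0, mul_pow]
  have hγ1m : ∀ m : ℕ, γ (X1 ^ m) = u ^ m * X1 ^ m := by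
    intro m
    rw [map_pow, hγ1, mul_pow]
  have h0 : ∀ m : ℕ, δ (X0 ^ m) =
      -(∑ i ∈ Finset.range m, v ^ (i + 1)) * X0 ^ m := by
    intro m
    rw [← sub_eq_zero]
    apply htf
    rw [mul_sub, hδ, hγ0m]
    have : (u - 1) * (-(∑ i ∈ Finset.range m, v ^ (i + 1)) * X0 ^ m)
        = -((1 - v ^ m) * X0 ^ m) := by
      rw [← key0 m]; ring
    rw [this]; ring
  have h1 : ∀ m : ℕ, δ (X1 ^ m) =
      (∑ i ∈ Finset.range m, u ^ i) * X1 ^ m := by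
    intro m
    rw [← sub_eq_zero]
    apply htf
    rw [mul_sub, hδ, hγ1m]
    have : (u - 1) * ((∑ i ∈ Finset.range m, u ^ i) * X1 ^ m)
        = (u ^ m - 1) * X1 ^ m := by
      rw [← key1 m]; ring
    rw [this]; ring
  refine ⟨h0, h1, ?_⟩
  intro B _ θ hθ
  have hθv : θ v = 1 := by
    have := congrArg θ huv
    rw [map_mul, hθ, one_mul, map_one] at this
    exact this
  have t0 : ∀ m : ℕ, θ (δ (X0 ^ m)) = -(m : B) * θ X0 ^ m := by
    intro m
    rw [h0 m, map_mul, map_neg, map_sum, map_pow]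
    simp [hθv]
  have t1 : ∀ m : ℕ, θ (δ (X1 ^ m)) = (m : B) * θ X1 ^ m := by
    intro m
    rw [h1 m, map_mul, map_sum, map_pow]
    simp [hθ]
  refine ⟨t0, t1, ?_, ?_⟩
  · intro pp r
    rw [t0 (pp ^ r)]
    push_cast
    ring
  · intro pp r
    rw [t1 (pp ^ r)]
    push_cast
    ring
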